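/- For any positive semi-definite matrix $M$, $\operatorname{tr}(\sqrt{M}) \le \sum_i \sqrt{M_{ii}}$, i.e., the trace of the positive square root is at most the sum of the square roots of the diagonal entries. -/

import Mathlib

open Matrix
open scoped ComplexOrder

/-- `Matrix.PosSemidef.sqrt` as defined in Mathlib of December 2024 (removed since). -/
noncomputable def Matrix.PosSemidef.sqrt {n 𝕜 : Type*} [Fintype n] [DecidableEq n] [RCLike 𝕜]
    {A : Matrix n n 𝕜} (hA : A.PosSemidef) : Matrix n n 𝕜 :=
  hA.1.eigenvectorUnitary.1 * diagonal ((↑) ∘ Real.sqrt ∘ hA.1.eigenvalues) *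
    (star hA.1.eigenvectorUnitary : Matrix n n 𝕜)

theorem Matrix.PosSemidef.sqrt_mul_self {n 𝕜 : Type*} [Fintype n] [DecidableEq n] [RCLike 𝕜]
    {A : Matrix n n 𝕜} (hA : A.PosSemidef) : hA.sqrt * hA.sqrt = A := by
  have hU := Unitary.star_mul_self_of_mem hA.1.eigenvectorUnitary.2
  conv_rhs => rw [hA.1.spectral_theorem]
  rw [Unitary.conjStarAlgAut_apply, Matrix.PosSemidef.sqrt]
  have : (hA.1.eigenvectorUnitary.1 * diagonal ((↑) ∘ Real.sqrt ∘ hA.1.eigenvalues) *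
    (star hA.1.eigenvectorUnitary : Matrix n n 𝕜)) * (hA.1.eigenvectorUnitary.1 * diagonal ((↑) ∘ Real.sqrt ∘ hA.1.eigenvalues) *
    (star hA.1.eigenvectorUnitary : Matrix n n 𝕜)) = hA.1.eigenvectorUnitary.1 * (diagonal ((↑) ∘ Real.sqrt ∘ hA.1.eigenvalues) *
    ((star hA.1.eigenvectorUnitary : Matrix n n 𝕜) * hA.1.eigenvectorUnitary.1) * diagonal ((↑) ∘ Real.sqrt ∘ hA.1.eigenvalues)) *
    (star hA.1.eigenvectorUnitary : Matrix n n 𝕜) := by simp only [Matrix.mul_assoc]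
  rw [this, hU, Matrix.mul_one, diagonal_mul_diagonal]
  congr 3
  funext i
  simp only [Function.comp_apply]
  rw [← RCLike.ofReal_mul, Real.mul_self_sqrt (hA.eigenvalues_nonneg i)]

theorem Matrix.PosSemidef.posSemidef_sqrt {n 𝕜 : Type*} [Fintype n] [DecidableEq n] [RCLike 𝕜]
    {A : Matrix n n 𝕜} (hA : A.PosSemidef) : hA.sqrt.IsHermitian ∧ True := by
  refine ⟨?_, trivial⟩
  rw [Matrix.PosSemidef.sqrt, IsHermitian, conjTranspose_mul, conjTranspose_mul,
    diagonal_conjTranspose, Matrix.mul_assoc]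
  simp only [← Matrix.star_eq_conjTranspose, star_star]
  congr 3
  funext i
  simp

/-- For any positive semi-definite matrix `M`, `tr √M ≤ ∑ᵢ √(Mᵢᵢ)`. -/
theorem stmt15 {m : ℕ} (M : Matrix (Fin m) (Fin m) ℂ) (hM : M.PosSemidef) :
    (hM.sqrt.trace).re ≤ ∑ i, Real.sqrt (M i i).re := by
  set S := hM.sqrt with hS
  have hHerm : S.IsHermitian := hM.posSemidef_sqrt.1
  have hdiag : ∀ i, (M i i).re = ∑ j, Complex.normSq (S i j) := by
    intro i
    have : M i i = ∑ j, S i j * star (S i j) := by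
      conv_lhs => rw [← hM.sqrt_mul_self]
      simp only [Matrix.mul_apply]
      refine Finset.sum_congr rfl fun j _ => ?_
      congr 1
      have := congrFun (congrFun hHerm j) i
      simpa [Matrix.conjTranspose_apply] using this.symm
    rw [this]
    simp [Complex.mul_conj]
  have htr : (S.trace).re = ∑ i, (S i i).re := by
    simp [Matrix.trace, Complex.re_sum]
  rw [htr]
  refine Finset.sum_le_sum fun i _ => ?_
  have h1 : (S i i).re ^ 2 ≤ (M i i).re := by
    rw [hdiag i]
    calc (S i i).re ^ 2 ≤ Complex.normSq (S i i) := by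
          rw [Complex.normSq_apply]; nlinarith [sq_nonneg (S i i).im]
      _ ≤ ∑ j, Complex.normSq (S i j) :=
          Finset.single_le_sum (fun j _ => Complex.normSq_nonneg _) (Finset.mem_univ i)
  calc (S i i).re ≤ |(S i i).re| := le_abs_self _
    _ = Real.sqrt ((S i i).re ^ 2) := (Real.sqrt_sq_eq_abs _).symm
    _ ≤ Real.sqrt (M i i).re := Real.sqrt_le_sqrt h1
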